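/- Combinatorial mutations are well-defined independently of the choice of the polytopes {G_h}: if {G_h} and {G'_h} are two choices of decomposition data for the same width vector w and factor F, then mut_w(P, F; {G_h}) = mut_w(P, F; {G'_h}). -/

import Mathlib

open Set Pointwise

noncomputable section

def pairing {n : ℕ} (w : Fin n → ℤ) (x : Fin n → ℚ) : ℚ :=
  ∑ i, (w i : ℚ) * x i

def IsLatticePt {n : ℕ} (x : Fin n → ℚ) : Prop := ∀ i, ∃ z : ℤ, x i = (z : ℚ)

def IsLatticePolytope {n : ℕ} (P : Set (Fin n → ℚ)) : Prop :=
  ∃ S : Finset (Fin n → ℚ), (∀ x ∈ S, IsLatticePt x) ∧ P = convexHull ℚ (S : Set (Fin n → ℚ))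

def IsPrimitive {n : ℕ} (w : Fin n → ℤ) : Prop := Finset.univ.gcd w = 1

def wSlice {n : ℕ} (w : Fin n → ℤ) (h : ℤ) (P : Set (Fin n → ℚ)) : Set (Fin n → ℚ) :=
  convexHull ℚ {x | x ∈ P ∧ IsLatticePt x ∧ pairing w x = (h : ℚ)}

def mutation {n : ℕ} (w : Fin n → ℤ) (P F : Set (Fin n → ℚ)) (G : ℤ → Set (Fin n → ℚ)) :
    Set (Fin n → ℚ) :=
  convexHull ℚ ((⋃ h : ℤ, ⋃ _ : h < 0, G h) ∪
    ⋃ h : ℤ, ⋃ _ : 0 ≤ h, (wSlice w h P + (h : ℚ) • F))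

def IsMutData {n : ℕ} (w : Fin n → ℤ) (P F : Set (Fin n → ℚ))
    (G : ℤ → Set (Fin n → ℚ)) : Prop :=
  IsLatticePolytope F ∧ F.Nonempty ∧ (∀ x ∈ F, pairing w x = 0) ∧
  ∀ h : ℤ, h < 0 →
    (G h = ∅ ∨ IsLatticePolytope (G h)) ∧
    {v | v ∈ P.extremePoints ℚ ∧ pairing w v = (h : ℚ)} ⊆ G h + (-(h : ℚ)) • F ∧
    G h + (-(h : ℚ)) • F ⊆ wSlice w h P

def dpair {n : ℕ} (u v : Fin n → ℚ) : ℚ := ∑ i, u i * v i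

def dualP {n : ℕ} (P : Set (Fin n → ℚ)) : Set (Fin n → ℚ) := {u | ∀ v ∈ P, -1 ≤ dpair u v}

namespace MutAux


/-- coordinatewise cast ℚ^N → ℝ^N -/
def ca {N : ℕ} (x : Fin N → ℚ) : Fin N → ℝ := fun i => (x i : ℝ)

lemma ca_inj {N : ℕ} : Function.Injective (ca (N := N)) := by
  intro x y h
  funext i
  have h2 := congrFun h i
  simpa [ca] using h2

lemma ca_comb {N : ℕ} {ι : Type*} (t : Finset ι) (q : ι → ℚ) (v : ι → (Fin N → ℚ)) :
    ca (∑ i ∈ t, q i • v i) = ∑ i ∈ t, (q i : ℝ) • ca (v i) := by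
  funext k
  simp only [ca, Finset.sum_apply, Pi.smul_apply, smul_eq_mul]
  push_cast
  ring_nf

lemma ca_zero {N : ℕ} : ca (0 : Fin N → ℚ) = 0 := by
  funext k; simp [ca]

/-- Linear independence transfers from ℚ to ℝ for rational vectors. -/
lemma li_transfer {N m : ℕ} {v : Fin m → (Fin N → ℚ)}
    (h : LinearIndependent ℚ v) : LinearIndependent ℝ (fun j => ca (v j)) := by
  classical
  set A : Matrix (Fin N) (Fin m) ℚ := Matrix.of (fun i j => v j i) with hA
  have hmv : ∀ (R : Type) [CommRing R] (B : Matrix (Fin N) (Fin m) R) (g : Fin m → R),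
      B.mulVec g = ∑ j, g j • (fun i => B i j) := by
    intro R _ B g
    funext i
    simp [Matrix.mulVec, dotProduct, Finset.sum_apply, mul_comm]
  have hker : LinearMap.ker (Matrix.toLin' A) = ⊥ := by
    rw [LinearMap.ker_eq_bot']
    intro g hg
    have hg' : ∑ j, g j • v j = 0 := by
      rw [Matrix.toLin'_apply] at hg
      rw [hmv ℚ A g] at hg
      convert hg using 2
      rfl
    have := Fintype.linearIndependent_iff.1 h g hg'
    funext j; exact this j
  obtain ⟨gl, hgl⟩ := (Matrix.toLin' A).exists_leftInverse_of_injective hker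
  set B : Matrix (Fin m) (Fin N) ℚ := LinearMap.toMatrix' gl with hB
  have hBA : B * A = 1 := by
    have : LinearMap.toMatrix' (gl.comp (Matrix.toLin' A)) = B * A := by
      rw [LinearMap.toMatrix'_comp]
      simp [hB]
    rw [hgl] at this
    rw [← this, LinearMap.toMatrix'_id]
  have hBA' : @HMul.hMul _ _ (Matrix (Fin m) (Fin m) ℝ) Matrix.instHMulOfFintypeOfMulOfAddCommMonoid (B.map (Rat.cast : ℚ → ℝ)) (A.map (Rat.cast : ℚ → ℝ)) = (1 : Matrix (Fin m) (Fin m) ℝ) := by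
    have h2 : (B * A).map ((Rat.castHom ℝ) : ℚ → ℝ) = (1 : Matrix (Fin m) (Fin m) ℚ).map ((Rat.castHom ℝ) : ℚ → ℝ) := by rw [hBA]
    rw [Matrix.map_mul] at h2
    rw [Matrix.map_one _ (map_zero _) (map_one _)] at h2
    exact h2
  rw [Fintype.linearIndependent_iff]
  intro g hg
  have hAg : (A.map Rat.cast).mulVec g = 0 := by
    rw [hmv ℝ _ g]
    have he : ∀ j, (fun i => (A.map (Rat.cast : ℚ → ℝ)) i j) = ca (v j) := by
      intro j; funext i; rfl
    simp only [he]
    exact hg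
  have : g = 0 := by
    have h1 : (@HMul.hMul _ _ (Matrix (Fin m) (Fin m) ℝ) Matrix.instHMulOfFintypeOfMulOfAddCommMonoid (B.map (Rat.cast : ℚ → ℝ)) (A.map Rat.cast)).mulVec g = g := by
      rw [hBA', Matrix.one_mulVec]
    rw [← Matrix.mulVec_mulVec, hAg, Matrix.mulVec_zero] at h1
    exact h1.symm
  intro i; rw [this]; rfl


/-- removal of an index with zero weight -/
lemma remove_zero {N m : ℕ}
    (IH : ∀ (v : Fin m → (Fin N → ℚ)) (x : Fin N → ℚ) (w : Fin m → ℝ),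
      (∀ i, 0 ≤ w i) → (∑ i, w i • ca (v i) = ca x) →
      ∃ q : Fin m → ℚ, (∀ i, 0 ≤ q i) ∧ ∑ i, q i • v i = x)
    (v : Fin (m + 1) → (Fin N → ℚ)) (x : Fin N → ℚ) (w : Fin (m + 1) → ℝ)
    (hw : ∀ i, 0 ≤ w i) (hs : ∑ i, w i • ca (v i) = ca x)
    (i : Fin (m + 1)) (hi : w i = 0) :
    ∃ q : Fin (m + 1) → ℚ, (∀ i, 0 ≤ q i) ∧ ∑ i, q i • v i = x := by
  classical
  have hsum := Fin.sum_univ_succAbove (fun j => w j • ca (v j)) i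
  rw [hsum, hi, zero_smul, zero_add] at hs
  obtain ⟨q', hq'0, hq's⟩ := IH (fun j => v (i.succAbove j)) x (fun j => w (i.succAbove j))
    (fun j => hw _) hs
  set q2 : Fin (m + 1) → ℚ := i.insertNth 0 q' with hq2
  refine ⟨q2, ?_, ?_⟩
  · intro j
    refine Fin.succAboveCases i ?_ ?_ j
    · simp [hq2]
    · intro k
      simp only [hq2, Fin.insertNth_apply_succAbove]
      exact hq'0 k
  · have hsum2 := Fin.sum_univ_succAbove (fun j => q2 j • v j) i
    rw [hsum2]
    simp only [hq2, Fin.insertNth_apply_same, Fin.insertNth_apply_succAbove, zero_smul, zero_add]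
    exact hq's

lemma rat_solution {N : ℕ} : ∀ (m : ℕ) (v : Fin m → (Fin N → ℚ)) (x : Fin N → ℚ)
    (w : Fin m → ℝ), (∀ i, 0 ≤ w i) → (∑ i, w i • ca (v i) = ca x) →
    ∃ q : Fin m → ℚ, (∀ i, 0 ≤ q i) ∧ ∑ i, q i • v i = x := by
  intro m
  induction m with
  | zero =>
    intro v x w _ hs
    simp only [Finset.univ_eq_empty, Finset.sum_empty] at hs ⊢
    refine ⟨0, fun i => le_refl _, ?_⟩
    apply ca_inj
    rw [← hs, ca_zero]
  | succ m IH =>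
    intro v x w hw hs
    by_cases h0 : ∃ i, w i = 0
    · obtain ⟨i, hi⟩ := h0
      exact remove_zero IH v x w hw hs i hi
    · push_neg at h0
      by_cases hli : LinearIndependent ℚ v
      · by_cases hsp : x ∈ Submodule.span ℚ (Set.range v)
        · obtain ⟨q, hq⟩ := Submodule.mem_span_range_iff_exists_fun ℚ |>.1 hsp
          have hcast : ∑ i, (q i : ℝ) • ca (v i) = ca x := by
            rw [← ca_comb]; rw [hq]
          have heq : ∀ i, ((q i : ℝ) - w i) = 0 := by
            apply Fintype.linearIndependent_iff.1 (li_transfer hli)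
            simp only [sub_smul, Finset.sum_sub_distrib, hcast, hs, sub_self]
          refine ⟨q, fun i => ?_, hq⟩
          have := heq i
          have h2 : (q i : ℝ) = w i := by linarith
          have := hw i
          rw [← h2] at this
          exact_mod_cast this
        · exfalso
          have hsnoc : LinearIndependent ℚ (Fin.snoc v x : Fin (m + 2) → (Fin N → ℚ)) :=
            linearIndependent_fin_snoc.2 ⟨hli, hsp⟩
          have hli' := li_transfer hsnoc
          have h2 := Fintype.linearIndependent_iff.1 hli'
            (Fin.snoc w (-1)) ?_ (Fin.last (m + 1))
          · simp at h2
          · rw [Fin.sum_univ_castSucc]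
            simp only [Fin.snoc_castSucc, Fin.snoc_last]
            rw [hs]
            simp
      · rw [Fintype.not_linearIndependent_iff] at hli
        obtain ⟨g, hg, ⟨i0, hi0⟩⟩ := hli
        -- wlog some positive coefficient
        obtain ⟨g, hg, i0, hi0⟩ : ∃ g : Fin (m+1) → ℚ, (∑ i, g i • v i = 0) ∧ ∃ i, 0 < g i := by
          rcases lt_or_gt_of_ne hi0 with hneg | hpos
          · refine ⟨-g, ?_, i0, by simpa using hneg⟩
            simp only [Pi.neg_apply, neg_smul, Finset.sum_neg_distrib, hg, neg_zero]
          · exact ⟨g, hg, i0, hpos⟩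
        classical
        set s : Finset (Fin (m+1)) := Finset.univ.filter (fun i => 0 < g i) with hsdef
        have hse : s.Nonempty := ⟨i0, by simp [hsdef, hi0]⟩
        obtain ⟨istar, histar, hmin⟩ := Finset.exists_mem_eq_inf' hse (fun i => w i / (g i : ℝ))
        set t : ℝ := w istar / (g istar : ℝ) with ht
        have hgistar : (0 : ℝ) < (g istar : ℝ) := by
          have : 0 < g istar := by simpa [hsdef] using histar
          exact_mod_cast this
        have ht0 : 0 ≤ t := div_nonneg (hw istar) hgistar.le
        set w' : Fin (m+1) → ℝ := fun j => w j - t * (g j : ℝ) with hw'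
        have hw'0 : ∀ j, 0 ≤ w' j := by
          intro j
          by_cases hjs : j ∈ s
          · have hgj : (0 : ℝ) < (g j : ℝ) := by
              have : 0 < g j := by simpa [hsdef] using hjs
              exact_mod_cast this
            have hle : t ≤ w j / (g j : ℝ) := hmin ▸ Finset.inf'_le _ hjs
            have h2 : t * (g j : ℝ) ≤ w j := (le_div_iff₀ hgj).1 hle
            simp only [hw']
            linarith
          · have hgj : (g j : ℝ) ≤ 0 := by
              have : ¬ 0 < g j := by simpa [hsdef] using hjs
              have := le_of_not_gt this
              exact_mod_cast this
            have h2 : 0 ≤ t * -(g j : ℝ) := mul_nonneg ht0 (by linarith)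
            simp only [hw']
            nlinarith [hw j]
        have hw's : ∑ i, w' i • ca (v i) = ca x := by
          simp only [hw', sub_smul, Finset.sum_sub_distrib, hs]
          have : ∑ i, (t * (g i : ℝ)) • ca (v i) = t • ∑ i, (g i : ℝ) • ca (v i) := by
            rw [Finset.smul_sum]
            congr 1; funext i; rw [mul_smul]
          rw [this, ← ca_comb Finset.univ g v, hg, ca_zero, smul_zero, sub_zero]
        have hw'z : w' istar = 0 := by
          simp only [hw', ht]
          field_simp
          ring
        exact remove_zero IH v x w' hw'0 hw's istar hw'z

/-- A rational point in the real convex hull of finitely many rational points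
lies in the rational convex hull. -/
lemma rat_convexHull {n : ℕ} {S : Finset (Fin n → ℚ)} {x : Fin n → ℚ}
    (hx : ca x ∈ convexHull ℝ (ca '' (S : Set (Fin n → ℚ)))) :
    x ∈ convexHull ℚ (S : Set (Fin n → ℚ)) := by
  classical
  have himg : ca '' (S : Set (Fin n → ℚ)) = ((S.image ca : Finset (Fin n → ℝ)) : Set (Fin n → ℝ)) := by
    simp [Finset.coe_image]
  rw [himg, Finset.mem_convexHull'] at hx
  obtain ⟨W, hW0, hW1, hWs⟩ := hx
  have hinj : ∀ z ∈ S, ∀ y ∈ S, ca z = ca y → z = y := fun z _ y _ h => ca_inj h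
  rw [Finset.sum_image hinj] at hW1 hWs
  -- enumerate S
  set e := S.equivFin with he
  set v : Fin S.card → (Fin n → ℚ) := fun j => (e.symm j : Fin n → ℚ) with hv
  set w : Fin S.card → ℝ := fun j => W (ca (v j)) with hwdef
  have hsum1 : ∑ j, w j = 1 := by
    rw [← hW1, ← Finset.sum_attach S (fun z => W (ca z))]
    exact Equiv.sum_comp e.symm (fun a => W (ca (a : Fin n → ℚ)))
  have hsum2 : ∑ j, w j • ca (v j) = ca x := by
    rw [← hWs, ← Finset.sum_attach S (fun z => W (ca z) • ca z)]
    exact Equiv.sum_comp e.symm (fun a => W (ca (a : Fin n → ℚ)) • ca (a : Fin n → ℚ))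
  have ca_cons : ∀ y : Fin n → ℚ, ca (Fin.cons (1 : ℚ) y : Fin (n+1) → ℚ) =
      Fin.cons (1 : ℝ) (ca y) := by
    intro y
    funext i
    refine Fin.cases ?_ ?_ i
    · simp [ca]
    · intro k; simp [ca]
  have hbig : ∑ j, w j • ca ((Fin.cons (1 : ℚ) (v j) : Fin (n+1) → ℚ)) =
      ca (Fin.cons (1 : ℚ) x : Fin (n+1) → ℚ) := by
    simp only [ca_cons]
    funext i
    refine Fin.cases ?_ ?_ i
    · simp only [Finset.sum_apply, Pi.smul_apply, Fin.cons_zero, smul_eq_mul, mul_one]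
      exact hsum1
    · intro k
      simp only [Finset.sum_apply, Pi.smul_apply, Fin.cons_succ, smul_eq_mul]
      have := congrFun hsum2 k
      simpa using this
  obtain ⟨q, hq0, hqs⟩ := rat_solution S.card (fun j => (Fin.cons (1 : ℚ) (v j) : Fin (n+1) → ℚ))
    (Fin.cons (1 : ℚ) x) w (fun j => hW0 _ (Finset.mem_image_of_mem ca (e.symm j).2)) hbig
  have hq1 : ∑ j, q j = 1 := by
    have := congrFun hqs 0
    simpa [Finset.sum_apply] using this
  have hqx : ∑ j, q j • v j = x := by
    funext k
    have := congrFun hqs (Fin.succ k)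
    simpa [Finset.sum_apply] using this
  rw [← hqx]
  exact (convex_convexHull ℚ (S : Set (Fin n → ℚ))).sum_mem (fun j _ => hq0 j) hq1
    (fun j _ => subset_convexHull ℚ _ (e.symm j).2)



/-- Minkowski cancellation: if x + C ⊆ B + C with B closed convex and C nonempty bounded,
then x ∈ B. -/
lemma cancel {E : Type*} [NormedAddCommGroup E] [NormedSpace ℝ E]
    {B C : Set E} (hB : Convex ℝ B) (hBc : IsClosed B)
    (hC : C.Nonempty) {R : ℝ} (hCb : ∀ c ∈ C, ‖c‖ ≤ R) {x : E}
    (hx : ∀ c ∈ C, x + c ∈ B + C) : x ∈ B := by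
  classical
  obtain ⟨c₀, hc₀⟩ := hC
  have step : ∀ c : {c : E // c ∈ C}, ∃ p : E × {c : E // c ∈ C},
      p.1 ∈ B ∧ x + (c : E) = p.1 + (p.2 : E) := by
    rintro ⟨c, hc⟩
    obtain ⟨b, hb, c', hc', heq⟩ := hx c hc
    exact ⟨⟨b, ⟨c', hc'⟩⟩, hb, heq.symm⟩
  choose f hf1 hf2 using step
  set seq : ℕ → E × {c : E // c ∈ C} :=
    fun k => Nat.rec (⟨0, ⟨c₀, hc₀⟩⟩) (fun _ p => f p.2) k with hseq
  have hseqS : ∀ k, seq (k + 1) = f (seq k).2 := fun k => rfl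
  set b : ℕ → E := fun k => (seq k).1 with hb
  set c : ℕ → E := fun k => ((seq k).2 : E) with hc
  have hbB : ∀ k, b (k + 1) ∈ B := fun k => hf1 (seq k).2
  have hrec : ∀ k, x + c k = b (k + 1) + c (k + 1) := fun k => hf2 (seq k).2
  have hcC : ∀ k, c k ∈ C := fun k => ((seq k).2).2
  have key : ∀ N : ℕ, (N : ℝ) • x + c 0 = (∑ k ∈ Finset.range N, b (k + 1)) + c N := by
    intro N
    induction N with
    | zero => simp
    | succ N ih =>
      rw [Finset.sum_range_succ]
      push_cast
      rw [add_smul, one_smul]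
      calc (N : ℝ) • x + x + c 0 = ((N : ℝ) • x + c 0) + x := by abel
        _ = (∑ k ∈ Finset.range N, b (k + 1)) + c N + x := by rw [ih]
        _ = (∑ k ∈ Finset.range N, b (k + 1)) + (x + c N) := by abel
        _ = (∑ k ∈ Finset.range N, b (k + 1)) + (b (N + 1) + c (N + 1)) := by rw [hrec]
        _ = (∑ k ∈ Finset.range N, b (k + 1)) + b (N + 1) + c (N + 1) := by abel
  set bbar : ℕ → E := fun N => (N : ℝ)⁻¹ • ∑ k ∈ Finset.range N, b (k + 1) with hbbar
  have hbbarB : ∀ N : ℕ, 1 ≤ N → bbar N ∈ B := by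
    intro N hN
    have hNpos : (0 : ℝ) < (N : ℝ) := by exact_mod_cast Nat.pos_of_ne_zero (by omega)
    have hb2 : bbar N = ∑ k ∈ Finset.range N, (N : ℝ)⁻¹ • b (k + 1) := by
      rw [show bbar N = (N : ℝ)⁻¹ • ∑ k ∈ Finset.range N, b (k + 1) from rfl, Finset.smul_sum]
    rw [hb2]
    exact hB.sum_mem (fun k _ => by positivity)
      (by rw [Finset.sum_const, Finset.card_range, nsmul_eq_mul, mul_inv_cancel₀ hNpos.ne'])
      (fun k _ => hbB k)
  have hdist : ∀ N : ℕ, 1 ≤ N → ‖bbar N - x‖ ≤ 2 * R / N := by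
    intro N hN
    have hNpos : (0 : ℝ) < (N : ℝ) := by exact_mod_cast Nat.pos_of_ne_zero (by omega)
    have hx' : x = (N : ℝ)⁻¹ • ((N : ℝ) • x) := by
      rw [smul_smul, inv_mul_cancel₀ hNpos.ne', one_smul]
    have h1 : bbar N - x = (N : ℝ)⁻¹ • (c 0 - c N) := by
      rw [show bbar N = (N : ℝ)⁻¹ • ∑ k ∈ Finset.range N, b (k + 1) from rfl]
      nth_rewrite 1 [hx']
      rw [← smul_sub]
      congr 1
      have := key N
      have h2 : (∑ k ∈ Finset.range N, b (k + 1)) = (N : ℝ) • x + c 0 - c N := by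
        rw [key N]; abel
      rw [h2]; abel
    rw [h1, norm_smul]
    have hR0 : 0 ≤ R := le_trans (norm_nonneg _) (hCb c₀ hc₀)
    have : ‖c 0 - c N‖ ≤ 2 * R := by
      calc ‖c 0 - c N‖ ≤ ‖c 0‖ + ‖c N‖ := norm_sub_le _ _
        _ ≤ R + R := add_le_add (hCb _ (hcC 0)) (hCb _ (hcC N))
        _ = 2 * R := by ring
    calc ‖(N : ℝ)⁻¹‖ * ‖c 0 - c N‖ ≤ (N : ℝ)⁻¹ * (2 * R) := by
          rw [Real.norm_eq_abs, abs_of_pos (by positivity)]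
          exact mul_le_mul_of_nonneg_left this (by positivity)
      _ = 2 * R / N := by ring
  have htend : Filter.Tendsto bbar Filter.atTop (nhds x) := by
    rw [← tendsto_sub_nhds_zero_iff]
    apply squeeze_zero_norm' (a := fun N : ℕ => 2 * R / N)
    · filter_upwards [Filter.eventually_ge_atTop 1] with N hN
      exact hdist N hN
    · exact tendsto_const_div_atTop_nhds_zero_nat (2 * R)
  exact hBc.mem_of_tendsto htend
    (Filter.eventually_atTop.2 ⟨1, fun N hN => hbbarB N hN⟩)



lemma ca_add {N : ℕ} (x y : Fin N → ℚ) : ca (x + y) = ca x + ca y := by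
  funext i; simp [ca]

lemma ca_smul {N : ℕ} (q : ℚ) (x : Fin N → ℚ) : ca (q • x) = (q : ℝ) • ca x := by
  funext i; simp [ca]

/-- the cast image of a rational convex hull sits inside the real convex hull. -/
lemma ca_convexHull {N : ℕ} {A : Set (Fin N → ℚ)} {x : Fin N → ℚ}
    (hx : x ∈ convexHull ℚ A) : ca x ∈ convexHull ℝ (ca '' A) := by
  rw [convexHull_eq] at hx
  obtain ⟨ι, t, wt, z, hw0, hw1, hz, hx⟩ := hx
  have hxe : x = ∑ i ∈ t, wt i • z i := by
    rw [← hx, Finset.centerMass_eq_of_sum_1 _ _ hw1]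
  have : ca x = ∑ i ∈ t, (wt i : ℝ) • ca (z i) := by rw [hxe, ca_comb]
  rw [this]
  refine (convex_convexHull ℝ (ca '' A)).sum_mem (fun i hi => by exact_mod_cast hw0 i hi) ?_
    (fun i hi => subset_convexHull ℝ _ ⟨z i, hz i hi, rfl⟩)
  exact_mod_cast hw1

/-- pairing as a linear map -/
def pairingL {n : ℕ} (w : Fin n → ℤ) : (Fin n → ℚ) →ₗ[ℚ] ℚ where
  toFun := pairing w
  map_add' x y := by
    simp only [pairing, Pi.add_apply, mul_add]
    rw [Finset.sum_add_distrib]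
  map_smul' q x := by
    simp only [pairing, Pi.smul_apply, smul_eq_mul, RingHom.id_apply]
    rw [Finset.mul_sum]
    congr 1; funext i; ring

lemma pairing_sum {n : ℕ} (w : Fin n → ℤ) {ι : Type*} (t : Finset ι) (q : ι → ℚ)
    (v : ι → (Fin n → ℚ)) :
    pairing w (∑ i ∈ t, q i • v i) = ∑ i ∈ t, q i * pairing w (v i) := by
  have := map_sum (pairingL w) (fun i => q i • v i) t
  simp only [map_smul, smul_eq_mul] at this
  exact this

lemma pairing_add_smul {n : ℕ} (w : Fin n → ℤ) (x f : Fin n → ℚ) (q : ℚ) :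
    pairing w (x + q • f) = pairing w x + q * pairing w f := by
  have := (pairingL w).map_add x (q • f)
  simp only [map_smul, smul_eq_mul] at this
  exact this

lemma pairing_int {n : ℕ} (w : Fin n → ℤ) {x : Fin n → ℚ} (hx : IsLatticePt x) :
    ∃ z : ℤ, pairing w x = (z : ℚ) := by
  choose zf hzf using hx
  refine ⟨∑ i, w i * zf i, ?_⟩
  rw [pairing]
  push_cast
  exact Finset.sum_congr rfl fun i _ => by rw [hzf i]

lemma pairing_le_hull {n : ℕ} (w : Fin n → ℤ) {A : Set (Fin n → ℚ)} {r : ℚ}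
    (h : ∀ a ∈ A, pairing w a ≤ r) {x : Fin n → ℚ} (hx : x ∈ convexHull ℚ A) :
    pairing w x ≤ r :=
  convexHull_min h (convex_halfSpace_le (pairingL w).isLinear r) hx

lemma pairing_ge_hull {n : ℕ} (w : Fin n → ℤ) {A : Set (Fin n → ℚ)} {r : ℚ}
    (h : ∀ a ∈ A, r ≤ pairing w a) {x : Fin n → ℚ} (hx : x ∈ convexHull ℚ A) :
    r ≤ pairing w x :=
  convexHull_min h (convex_halfSpace_ge (pairingL w).isLinear r) hx

/-- lattice points in a polytope form a finite set -/
lemma lattice_finite {n : ℕ} (S : Finset (Fin n → ℚ)) :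
    {x : Fin n → ℚ | x ∈ convexHull ℚ (S : Set (Fin n → ℚ)) ∧ IsLatticePt x}.Finite := by
  classical
  set lo : Fin n → ℚ := fun i => -(∑ v ∈ S, |v i|) with hlo
  set hi : Fin n → ℚ := fun i => ∑ v ∈ S, |v i| with hhi
  have hbound : ∀ x ∈ convexHull ℚ (S : Set (Fin n → ℚ)), ∀ i, lo i ≤ x i ∧ x i ≤ hi i := by
    intro x hx i
    constructor
    · refine convexHull_min (fun a ha => ?_)
        (convex_halfSpace_ge (f := fun x : Fin n → ℚ => x i) ⟨fun _ _ => rfl, fun c x => by simp⟩ (lo i)) hx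
      show lo i ≤ a i
      have h1 : |a i| ≤ ∑ v ∈ S, |v i| := Finset.single_le_sum (fun v _ => abs_nonneg (v i)) ha
      have := neg_abs_le (a i)
      simp only [hlo]
      linarith
    · refine convexHull_min (fun a ha => ?_)
        (convex_halfSpace_le (f := fun x : Fin n → ℚ => x i) ⟨fun _ _ => rfl, fun c x => by simp⟩ (hi i)) hx
      show a i ≤ hi i
      have h1 : |a i| ≤ ∑ v ∈ S, |v i| := Finset.single_le_sum (fun v _ => abs_nonneg (v i)) ha
      have := le_abs_self (a i)
      simp only [hhi]
      linarith
  apply Set.Finite.subset (Set.Finite.pi' (t := fun i =>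
    (fun z : ℤ => (z : ℚ)) '' (Set.Icc ⌈lo i⌉ ⌊hi i⌋)) ?_)
  · rintro x ⟨hxh, hxl⟩ i
    obtain ⟨z, hz⟩ := hxl i
    obtain ⟨h1, h2⟩ := hbound x hxh i
    rw [hz] at h1 h2
    exact ⟨z, ⟨Int.ceil_le.2 h1, Int.le_floor.2 h2⟩, hz.symm⟩
  · intro i
    exact (Set.finite_Icc _ _).image _

/-- a vertex not in the hull of the others is an extreme point -/
lemma extreme_of_not_mem_erase {n : ℕ} (S : Finset (Fin n → ℚ)) (s : Fin n → ℚ) (hs : s ∈ S)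
    (h : s ∉ convexHull ℚ ((S.erase s : Finset (Fin n → ℚ)) : Set (Fin n → ℚ))) :
    s ∈ (convexHull ℚ (S : Set (Fin n → ℚ))).extremePoints ℚ := by
  classical
  rw [mem_extremePoints]
  refine ⟨subset_convexHull ℚ _ hs, ?_⟩
  intro x₁ hx₁ x₂ hx₂ hseg
  obtain ⟨a, b, ha, hb, hab, habs⟩ := hseg
  obtain ⟨w1, hw10, hw11, hw1s⟩ := Finset.mem_convexHull'.1 hx₁
  obtain ⟨w2, hw20, hw21, hw2s⟩ := Finset.mem_convexHull'.1 hx₂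
  set u : (Fin n → ℚ) → ℚ := fun y => a * w1 y + b * w2 y with hu
  have hu0 : ∀ y ∈ S, 0 ≤ u y := fun y hy =>
    add_nonneg (mul_nonneg ha.le (hw10 y hy)) (mul_nonneg hb.le (hw20 y hy))
  have hu1 : ∑ y ∈ S, u y = 1 := by
    simp only [hu]
    rw [Finset.sum_add_distrib, ← Finset.mul_sum, ← Finset.mul_sum, hw11, hw21]
    simpa using hab
  have hus : ∑ y ∈ S, u y • y = s := by
    simp only [hu, add_smul, mul_smul]
    rw [Finset.sum_add_distrib, ← Finset.smul_sum, ← Finset.smul_sum, hw1s, hw2s]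
    exact habs
  have husle : u s ≤ 1 := by
    rw [← hu1]
    exact Finset.single_le_sum hu0 hs
  by_cases hc : u s = 1
  · -- both weights at s are 1
    have hw1e : w1 s = 1 := by
      have h1 : w1 s ≤ 1 := hw11 ▸ Finset.single_le_sum hw10 hs
      have h2 : w2 s ≤ 1 := hw21 ▸ Finset.single_le_sum hw20 hs
      by_contra hne
      have : w1 s < 1 := lt_of_le_of_ne h1 hne
      have : u s < 1 := by
        simp only [hu]
        nlinarith [hw20 s hs, hw10 s hs]
      exact absurd hc (ne_of_lt this)
    have hw2e : w2 s = 1 := by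
      have h2 : w2 s ≤ 1 := hw21 ▸ Finset.single_le_sum hw20 hs
      by_contra hne
      have : w2 s < 1 := lt_of_le_of_ne h2 hne
      have : u s < 1 := by
        simp only [hu]
        nlinarith [hw10 s hs, hw11 ▸ Finset.single_le_sum hw10 hs]
      exact absurd hc (ne_of_lt this)
    have hzero1 : ∀ y ∈ S.erase s, w1 y = 0 := by
      intro y hy
      have hsum : ∑ y ∈ S.erase s, w1 y = 0 := by
        have := Finset.add_sum_erase S w1 hs
        rw [← this, hw1e] at hw11
        linarith
      have := Finset.sum_eq_zero_iff_of_nonneg (fun y hy => hw10 y (Finset.mem_of_mem_erase hy)) |>.1 hsum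
      exact this y hy
    have hzero2 : ∀ y ∈ S.erase s, w2 y = 0 := by
      intro y hy
      have hsum : ∑ y ∈ S.erase s, w2 y = 0 := by
        have := Finset.add_sum_erase S w2 hs
        rw [← this, hw2e] at hw21
        linarith
      have := Finset.sum_eq_zero_iff_of_nonneg (fun y hy => hw20 y (Finset.mem_of_mem_erase hy)) |>.1 hsum
      exact this y hy
    have hx1s : x₁ = s := by
      rw [← hw1s, ← Finset.add_sum_erase S (fun y => w1 y • y) hs, hw1e, one_smul,
        Finset.sum_eq_zero (fun y hy => by rw [hzero1 y hy, zero_smul]), add_zero]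
    have hx2s : x₂ = s := by
      rw [← hw2s, ← Finset.add_sum_erase S (fun y => w2 y • y) hs, hw2e, one_smul,
        Finset.sum_eq_zero (fun y hy => by rw [hzero2 y hy, zero_smul]), add_zero]
    exact ⟨hx1s, hx2s⟩
  · exfalso
    have hclt : u s < 1 := lt_of_le_of_ne husle hc
    have hpos : 0 < 1 - u s := by linarith
    apply h
    rw [Finset.mem_convexHull']
    refine ⟨fun y => (1 - u s)⁻¹ * u y, fun y hy => mul_nonneg (by positivity)
      (hu0 y (Finset.mem_of_mem_erase hy)), ?_, ?_⟩
    · rw [← Finset.mul_sum]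
      have hsum : ∑ y ∈ S.erase s, u y = 1 - u s := by
        have := Finset.add_sum_erase S u hs
        rw [← this] at hu1
        linarith
      rw [hsum, inv_mul_cancel₀ (ne_of_gt hpos)]
    · have hkey : ∑ y ∈ S.erase s, u y • y = (1 - u s) • s := by
        have hsplit := Finset.add_sum_erase S (fun y => u y • y) hs
        have h2 : u s • s + ∑ y ∈ S.erase s, u y • y = s := by
          rw [hsplit]; exact hus
        have h3 : ∑ y ∈ S.erase s, u y • y = s - u s • s := by
          have h4 : (∑ y ∈ S.erase s, u y • y) + u s • s = s := by
            rw [add_comm]; exact h2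
          exact eq_sub_of_add_eq h4
        rw [h3, sub_smul, one_smul]
      calc ∑ y ∈ S.erase s, ((1 - u s)⁻¹ * u y) • y
          = (1 - u s)⁻¹ • ∑ y ∈ S.erase s, u y • y := by
            rw [Finset.smul_sum]
            exact Finset.sum_congr rfl fun y _ => by rw [mul_smul]
        _ = (1 - u s)⁻¹ • ((1 - u s) • s) := by rw [hkey]
        _ = s := by rw [smul_smul, inv_mul_cancel₀ (ne_of_gt hpos), one_smul]

/-- finite Krein–Milman: a polytope is the hull of its extreme points (among the generators) -/
lemma exists_extreme_gen {n : ℕ} (S : Finset (Fin n → ℚ)) :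
    ∃ S' : Finset (Fin n → ℚ), S' ⊆ S ∧
      (S' : Set (Fin n → ℚ)) ⊆ (convexHull ℚ (S : Set (Fin n → ℚ))).extremePoints ℚ ∧
      convexHull ℚ (S' : Set (Fin n → ℚ)) = convexHull ℚ (S : Set (Fin n → ℚ)) := by
  classical
  induction S using Finset.strongInduction with
  | _ S IH =>
    by_cases hall : ∀ s ∈ S, s ∈ (convexHull ℚ (S : Set (Fin n → ℚ))).extremePoints ℚ
    · exact ⟨S, le_refl _, fun s hs => hall s hs, rfl⟩
    · push_neg at hall
      obtain ⟨s, hs, hsne⟩ := hall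
      have hmem : s ∈ convexHull ℚ ((S.erase s : Finset (Fin n → ℚ)) : Set (Fin n → ℚ)) := by
        by_contra hmem
        exact hsne (extreme_of_not_mem_erase S s hs hmem)
      have heq : convexHull ℚ ((S.erase s : Finset (Fin n → ℚ)) : Set (Fin n → ℚ)) =
          convexHull ℚ (S : Set (Fin n → ℚ)) := by
        apply le_antisymm
        · exact convexHull_mono (by exact_mod_cast Finset.erase_subset s S)
        · apply convexHull_min ?_ (convex_convexHull ℚ _)
          intro y hy
          by_cases hys : y = s
          · rw [hys]; exact hmem
          · exact subset_convexHull ℚ _ (Finset.mem_erase.2 ⟨hys, hy⟩)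
      obtain ⟨S', hS'sub, hS'ext, hS'eq⟩ := IH (S.erase s) (Finset.erase_ssubset hs)
      refine ⟨S', hS'sub.trans (Finset.erase_subset s S), ?_, by rw [hS'eq, heq]⟩
      rw [heq] at hS'ext
      exact hS'ext


lemma convex_shift_smul {E : Type*} [AddCommGroup E] [Module ℝ E] {D : Set E}
    (hD : Convex ℝ D) (p : E) (c : ℝ) : Convex ℝ {z | p + c • z ∈ D} := by
  intro z1 hz1 z2 hz2 a b ha hb hab
  show p + c • (a • z1 + b • z2) ∈ D
  have heq : p + c • (a • z1 + b • z2) = a • (p + c • z1) + b • (p + c • z2) := by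
    rw [show b = 1 - a from by linarith]
    module
  rw [heq]
  exact hD hz1 hz2 ha hb hab


end MutAux

section Main

open MutAux

/-- One-sided inclusion. -/
theorem mutation_subset_aux {n : ℕ} (w : Fin n → ℤ) (P F : Set (Fin n → ℚ))
    (G G' : ℤ → Set (Fin n → ℚ)) (hP : IsLatticePolytope P)
    (hdata : IsMutData w P F G) (hdata' : IsMutData w P F G') :
    mutation w P F G ⊆ mutation w P F G' := by
  classical
  obtain ⟨SP, hSPlat, hSPeq⟩ := hP
  obtain ⟨hFpoly, hFne, hF0, hG⟩ := hdata
  obtain ⟨-, -, -, hG'⟩ := hdata'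
  obtain ⟨T, hTlat, hTeq⟩ := hFpoly
  have hTne : T.Nonempty := by
    rcases hFne with ⟨f, hf⟩
    by_contra hT
    rw [Finset.not_nonempty_iff_eq_empty] at hT
    rw [hTeq, hT] at hf
    simp at hf
  have hTF : (T : Set (Fin n → ℚ)) ⊆ F := by rw [hTeq]; exact subset_convexHull ℚ _
  set M := mutation w P F G' with hM
  set Xgen : Set (Fin n → ℚ) := (⋃ h : ℤ, ⋃ _ : h < 0, G' h) ∪
    ⋃ h : ℤ, ⋃ _ : 0 ≤ h, (wSlice w h P + (h : ℚ) • F) with hXgen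
  have hMX : M = convexHull ℚ Xgen := rfl
  have hMconv : Convex ℚ M := convex_convexHull ℚ _
  -- extreme generators of P
  obtain ⟨S', hS'sub, hS'ext, hS'eq⟩ := exists_extreme_gen SP
  rw [← hSPeq] at hS'ext hS'eq
  -- bound on pairing over P
  set B : ℚ := ∑ v ∈ SP, |pairing w v| with hB
  have hPbound : ∀ x ∈ P, |pairing w x| ≤ B := by
    intro x hx
    rw [hSPeq] at hx
    rw [abs_le]
    constructor
    · refine pairing_ge_hull w (fun a ha => ?_) hx
      have h1 : |pairing w a| ≤ B :=
        Finset.single_le_sum (f := fun v => |pairing w v|) (fun v _ => abs_nonneg _) ha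
      have h2 := neg_abs_le (pairing w a)
      linarith
    · refine pairing_le_hull w (fun a ha => ?_) hx
      have h1 : |pairing w a| ≤ B :=
        Finset.single_le_sum (f := fun v => |pairing w v|) (fun v _ => abs_nonneg _) ha
      have h2 := le_abs_self (pairing w a)
      linarith
  set Bz : ℤ := ⌈B⌉ with hBz
  set L : ℤ → Set (Fin n → ℚ) :=
    fun h => {x | x ∈ P ∧ IsLatticePt x ∧ pairing w x = (h : ℚ)} with hL
  have hslice : ∀ h : ℤ, wSlice w h P = convexHull ℚ (L h) := fun h => rfl
  have hLfin : ∀ h : ℤ, (L h).Finite := by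
    intro h
    apply (lattice_finite SP).subset
    rintro x ⟨hx1, hx2, -⟩
    exact ⟨by rwa [← hSPeq], hx2⟩
  have hLempty : ∀ h : ℤ, Bz < |h| → L h = ∅ := by
    intro h hh
    ext x
    simp only [hL, Set.mem_setOf_eq, Set.mem_empty_iff_false, iff_false, not_and]
    intro hx1 _ hx3
    have h1 := hPbound x hx1
    rw [hx3] at h1
    have h2 : B ≤ (Bz : ℚ) := Int.le_ceil B
    have h3 : |(h : ℚ)| ≤ (Bz : ℚ) := le_trans h1 h2
    rw [← Int.cast_abs] at h3
    have h4 : |h| ≤ Bz := by exact_mod_cast h3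
    omega
  have hG'empty : ∀ h : ℤ, h < -Bz → G' h = ∅ := by
    intro h hh
    have h0 : h < 0 := by
      have : 0 ≤ Bz := by
        have : (0 : ℚ) ≤ B := Finset.sum_nonneg fun v _ => abs_nonneg _
        exact_mod_cast le_trans this (Int.le_ceil B)
      omega
    by_contra hne
    obtain ⟨g, hg⟩ := Set.nonempty_iff_ne_empty.2 hne
    obtain ⟨f, hf⟩ := hFne
    have hmem : g + (-(h : ℚ)) • f ∈ wSlice w h P :=
      (hG' h h0).2.2 (Set.add_mem_add hg (Set.smul_mem_smul_set hf))
    rw [hslice, hLempty h (by rw [abs_of_neg h0]; omega), convexHull_empty] at hmem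
    exact hmem
  -- choose finite generators for G' h
  have hGTex : ∀ h : ℤ, ∃ Th : Finset (Fin n → ℚ),
      h < 0 → G' h = convexHull ℚ (Th : Set (Fin n → ℚ)) := by
    intro h
    by_cases h0 : h < 0
    · rcases (hG' h h0).1 with he | ⟨Sh, -, hSh⟩
      · exact ⟨∅, fun _ => by simp [he]⟩
      · exact ⟨Sh, fun _ => hSh⟩
    · exact ⟨∅, fun hc => absurd hc h0⟩
  choose GT hGT using hGTex
  set X₀ : Set (Fin n → ℚ) := (⋃ h ∈ Set.Icc (-Bz) (-1 : ℤ), (GT h : Set (Fin n → ℚ))) ∪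
    (⋃ h ∈ Set.Icc (0 : ℤ) Bz, (L h + (h : ℚ) • (T : Set (Fin n → ℚ)))) with hX₀
  have hX₀fin : X₀.Finite := by
    apply Set.Finite.union
    · exact Set.Finite.biUnion (Set.finite_Icc _ _) fun h _ => (GT h).finite_toSet
    · exact Set.Finite.biUnion (Set.finite_Icc _ _) fun h _ =>
        (hLfin h).add (T.finite_toSet.smul_set)
  have hX₀M : X₀ ⊆ M := by
    rintro z (hz | hz)
    · simp only [Set.mem_iUnion] at hz
      obtain ⟨h, hIcc, hzh⟩ := hz
      rw [Set.mem_Icc] at hIcc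
      have h0 : h < 0 := by omega
      have hzG : z ∈ G' h := by
        rw [hGT h h0]
        exact subset_convexHull ℚ _ hzh
      exact subset_convexHull ℚ _ (Or.inl (Set.mem_iUnion.2 ⟨h, Set.mem_iUnion.2 ⟨h0, hzG⟩⟩))
    · simp only [Set.mem_iUnion] at hz
      obtain ⟨h, hIcc, hzh⟩ := hz
      rw [Set.mem_Icc] at hIcc
      have h0 : (0 : ℤ) ≤ h := hIcc.1
      have hzin : z ∈ wSlice w h P + (h : ℚ) • F := by
        refine Set.add_subset_add ?_ ?_ hzh
        · rw [hslice h]; exact subset_convexHull ℚ _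
        · exact Set.smul_set_mono hTF
      exact subset_convexHull ℚ _ (Or.inr (Set.mem_iUnion.2 ⟨h, Set.mem_iUnion.2 ⟨h0, hzin⟩⟩))
  have hXgenX₀ : Xgen ⊆ convexHull ℚ X₀ := by
    rintro z (hz | hz)
    · simp only [Set.mem_iUnion] at hz
      obtain ⟨h, h0, hzh⟩ := hz
      by_cases hbig : h < -Bz
      · rw [hG'empty h hbig] at hzh
        exact absurd hzh (Set.notMem_empty z)
      · have hz2 : z ∈ convexHull ℚ ((GT h : Finset (Fin n → ℚ)) : Set (Fin n → ℚ)) := by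
          rw [← hGT h h0]; exact hzh
        refine convexHull_mono ?_ hz2
        intro y hy
        exact Or.inl (Set.mem_iUnion.2 ⟨h, Set.mem_iUnion.2 ⟨Set.mem_Icc.2 ⟨by omega, by omega⟩, hy⟩⟩)
    · simp only [Set.mem_iUnion] at hz
      obtain ⟨h, h0, hzh⟩ := hz
      by_cases hbig : Bz < h
      · rw [hslice, hLempty h (by rw [abs_of_nonneg h0]; omega), convexHull_empty, Set.empty_add] at hzh
        exact absurd hzh (Set.notMem_empty z)
      · have heq : wSlice w h P + (h : ℚ) • F =
            convexHull ℚ (L h + (h : ℚ) • (T : Set (Fin n → ℚ))) := by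
          rw [hslice h, hTeq, ← convexHull_smul, ← convexHull_add]
        rw [heq] at hzh
        refine convexHull_mono ?_ hzh
        intro y hy
        exact Or.inr (Set.mem_iUnion.2 ⟨h, Set.mem_iUnion.2 ⟨Set.mem_Icc.2 ⟨h0, by omega⟩, hy⟩⟩)
  have hconvX₀M : convexHull ℚ X₀ ⊆ M := convexHull_min hX₀M hMconv
  -- real picture
  set 𝕄 : Set (Fin n → ℝ) := convexHull ℝ (ca '' X₀) with h𝕄
  have h𝕄compact : IsCompact 𝕄 := (hX₀fin.image ca).isCompact_convexHull ℝ
  have h𝕄conv : Convex ℝ 𝕄 := convex_convexHull ℝ _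
  have hM𝕄 : ∀ y ∈ M, ca y ∈ 𝕄 := by
    intro y hy
    have hy2 : y ∈ convexHull ℚ X₀ := by
      rw [hMX] at hy
      exact convexHull_min hXgenX₀ (convex_convexHull ℚ _) hy
    exact ca_convexHull hy2
  set 𝔽 : Set (Fin n → ℝ) := convexHull ℝ (ca '' (T : Set (Fin n → ℚ))) with h𝔽
  have h𝔽compact : IsCompact 𝔽 := (T.finite_toSet.image ca).isCompact_convexHull ℝ
  have h𝔽conv : Convex ℝ 𝔽 := convex_convexHull ℝ _
  have h𝔽ne : 𝔽.Nonempty := by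
    obtain ⟨f, hf⟩ := hTne
    exact ⟨ca f, subset_convexHull ℝ _ ⟨f, hf, rfl⟩⟩
  have hF𝔽 : ∀ f ∈ F, ca f ∈ 𝔽 := by
    intro f hf
    rw [hTeq] at hf
    exact ca_convexHull hf
  set R : ℝ := ∑ f ∈ T, ‖ca f‖ with hR
  have h𝔽R : ∀ z ∈ 𝔽, ‖z‖ ≤ R := by
    have hsub : 𝔽 ⊆ Metric.closedBall 0 R := by
      refine convexHull_min ?_ (convex_closedBall 0 R)
      rintro zz ⟨f, hf, rfl⟩
      rw [Metric.mem_closedBall, dist_zero_right]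
      exact Finset.single_le_sum (f := fun f => ‖ca f‖) (fun f _ => norm_nonneg _) hf
    intro z hz
    have := hsub hz
    rwa [Metric.mem_closedBall, dist_zero_right] at this
  -- the key step
  have hcore : ∀ h : ℤ, h < 0 → ∀ y ∈ L h, ca y ∈ 𝕄 + (-(h : ℝ)) • 𝔽 := by
    intro h h0 y hy
    obtain ⟨hyP, hylat, hypair⟩ := hy
    -- decompose y over extreme generators
    have hyhull : y ∈ convexHull ℚ (S' : Set (Fin n → ℚ)) := by rw [hS'eq]; exact hyP
    obtain ⟨lam, hlam0, hlam1, hlams⟩ := Finset.mem_convexHull'.1 hyhull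
    have hvint : ∀ v ∈ S', ∃ z : ℤ, pairing w v = (z : ℚ) := fun v hv =>
      pairing_int w (hSPlat v (hS'sub hv))
    choose! zf hzf using hvint
    have hneg : ∀ v ∈ S', pairing w v < 0 →
        ∃ g, g ∈ G' (zf v) ∧ ∃ fv, fv ∈ F ∧ v = g + (-(pairing w v)) • fv := by
      intro v hv hvneg
      have hzneg : zf v < 0 := by
        have h1 := hzf v hv
        rw [h1] at hvneg
        exact_mod_cast hvneg
      have hmem : v ∈ G' (zf v) + (-((zf v : ℤ) : ℚ)) • F :=
        (hG' (zf v) hzneg).2.1 ⟨hS'ext hv, hzf v hv⟩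
      obtain ⟨g, hg, u, hu, huv⟩ := Set.mem_add.1 hmem
      obtain ⟨fv, hfv, rfl⟩ := hu
      refine ⟨g, hg, fv, hfv, ?_⟩
      rw [hzf v hv]
      exact huv.symm
    choose! gf hgf ff hff hvf using hneg
    set S'n := S'.filter (fun v => pairing w v < 0) with hS'n
    set c : ℚ := ∑ v ∈ S'.filter (fun v => ¬ pairing w v < 0), lam v * pairing w v with hcdef
    set r : ℚ := ∑ v ∈ S'n, lam v * (-pairing w v) with hrdef
    have hc0 : 0 ≤ c := Finset.sum_nonneg fun v hv => by
      rw [Finset.mem_filter] at hv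
      exact mul_nonneg (hlam0 v hv.1) (not_lt.1 hv.2)
    have hr0 : 0 ≤ r := Finset.sum_nonneg fun v hv => by
      rw [Finset.mem_filter] at hv
      have := hv.2
      exact mul_nonneg (hlam0 v hv.1) (by linarith)
    have hFconv : Convex ℚ F := by rw [hTeq]; exact convex_convexHull ℚ _
    have hcr : c - r = (h : ℚ) := by
      have h1 : r = -∑ v ∈ S'n, lam v * pairing w v := by
        rw [hrdef, ← Finset.sum_neg_distrib]
        exact Finset.sum_congr rfl fun v _ => by ring
      have h2 := Finset.sum_filter_add_sum_filter_not S' (fun v => pairing w v < 0)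
        (fun v => lam v * pairing w v)
      have h3 : pairing w y = ∑ v ∈ S', lam v * pairing w v := by
        conv_lhs => rw [← hlams]
        exact pairing_sum w S' lam (fun v => v)
      rw [hypair] at h3
      rw [hcdef, h1, hS'n]
      linarith [h2, h3.symm]
    have hkeyQ : ∀ f ∈ F, y + c • f ∈ M + r • F := by
      intro f hf
      set mfun : (Fin n → ℚ) → (Fin n → ℚ) :=
        fun v => if pairing w v < 0 then gf v else v + pairing w v • f with hmfun
      have hmfunM : ∀ v ∈ S', mfun v ∈ M := by
        intro v hv
        by_cases hvneg : pairing w v < 0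
        · have hzneg : zf v < 0 := by
            have h1 := hzf v hv
            rw [h1] at hvneg
            exact_mod_cast hvneg
          rw [show mfun v = gf v from if_pos hvneg]
          exact subset_convexHull ℚ _ (Or.inl (Set.mem_iUnion.2 ⟨zf v,
            Set.mem_iUnion.2 ⟨hzneg, hgf v hv hvneg⟩⟩))
        · have hz0 : (0 : ℤ) ≤ zf v := by
            have h1 := hzf v hv
            have h2 := not_lt.1 hvneg
            rw [h1] at h2
            exact_mod_cast h2
          rw [show mfun v = v + pairing w v • f from if_neg hvneg]
          refine subset_convexHull ℚ _ (Or.inr (Set.mem_iUnion.2 ⟨zf v,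
            Set.mem_iUnion.2 ⟨hz0, ?_⟩⟩))
          refine Set.add_mem_add ?_ ?_
          · rw [hslice (zf v)]
            refine subset_convexHull ℚ _ ⟨?_, hSPlat v (hS'sub hv), hzf v hv⟩
            rw [← hS'eq]
            exact subset_convexHull ℚ _ hv
          · rw [show pairing w v • f = ((zf v : ℤ) : ℚ) • f from by rw [← hzf v hv]]
            exact Set.smul_mem_smul_set hf
      have hterm : ∀ v ∈ S',
          lam v • v + (if pairing w v < 0 then 0 else lam v * pairing w v) • f
          = lam v • mfun v + (if pairing w v < 0 then (lam v * (-pairing w v)) • ff v else 0) := by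
        intro v hv
        by_cases hvneg : pairing w v < 0
        · rw [if_pos hvneg, if_pos hvneg]
          rw [show mfun v = gf v from if_pos hvneg]
          have hveq := hvf v hv hvneg
          rw [show lam v • v = lam v • (gf v + (-pairing w v) • ff v) from by rw [← hveq]]
          rw [smul_add, smul_smul, zero_smul, add_zero]
        · rw [if_neg hvneg, if_neg hvneg]
          rw [show mfun v = v + pairing w v • f from if_neg hvneg]
          rw [smul_add, smul_smul, add_zero]
      have hstep1 : y + c • f = ∑ v ∈ S',
          (lam v • v + (if pairing w v < 0 then 0 else lam v * pairing w v) • f) := by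
        rw [Finset.sum_add_distrib, hlams, ← Finset.sum_smul]
        congr 2
        rw [hcdef, Finset.sum_filter]
        refine Finset.sum_congr rfl fun v _ => ?_
        by_cases hv : pairing w v < 0 <;> simp [hv]
      have hstep2 : y + c • f =
          (∑ v ∈ S', lam v • mfun v) + (∑ v ∈ S'n, (lam v * (-pairing w v)) • ff v) := by
        rw [hstep1, Finset.sum_congr rfl hterm, Finset.sum_add_distrib]
        congr 1
        rw [hS'n, Finset.sum_filter]
      rw [hstep2]
      refine Set.add_mem_add ?_ ?_
      · exact hMconv.sum_mem (fun v hv => hlam0 v hv) hlam1 hmfunM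
      · by_cases hrz : r = 0
        · have hall : ∀ v ∈ S'n, lam v * (-pairing w v) = 0 := by
            have hz : ∑ v ∈ S'n, lam v * (-pairing w v) = 0 := by rw [← hrdef]; exact hrz
            exact fun v hv => (Finset.sum_eq_zero_iff_of_nonneg (fun v hv => by
              rw [Finset.mem_filter] at hv
              have h9 := hv.2
              exact mul_nonneg (hlam0 v hv.1) (by linarith))).1 hz v hv
          rw [Finset.sum_eq_zero (fun v hv => by rw [hall v hv, zero_smul])]
          rw [hrz, Set.zero_smul_set hFne]
          exact Set.zero_mem_zero
        · have hrpos : 0 < r := lt_of_le_of_ne hr0 (Ne.symm hrz)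
          have hrw : ∑ v ∈ S'n, (lam v * (-pairing w v)) • ff v
              = r • ∑ v ∈ S'n, ((lam v * (-pairing w v)) / r) • ff v := by
            rw [Finset.smul_sum]
            refine Finset.sum_congr rfl fun v hv => ?_
            rw [smul_smul]
            congr 1
            field_simp
          rw [hrw]
          refine Set.smul_mem_smul_set ?_
          refine hFconv.sum_mem (fun v hv => ?_) ?_ (fun v hv => ?_)
          · rw [Finset.mem_filter] at hv
            have := hv.2
            exact div_nonneg (mul_nonneg (hlam0 v hv.1) (by linarith)) hr0
          · rw [← Finset.sum_div, ← hrdef, div_self hrz]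
          · rw [Finset.mem_filter] at hv
            exact hff v hv.1 hv.2
    -- transfer to ℝ and cancel
    set Bset := 𝕄 + (-(h : ℝ)) • 𝔽 with hBset
    have hBconv' : Convex ℝ Bset := h𝕄conv.add (h𝔽conv.smul _)
    have hmemD : ∀ z ∈ 𝔽, ca y + (c : ℝ) • z ∈ Bset + (c : ℝ) • 𝔽 := by
      have hDconv : Convex ℝ (Bset + (c : ℝ) • 𝔽) := hBconv'.add (h𝔽conv.smul _)
      have hsub2 : 𝔽 ⊆ {z | ca y + (c : ℝ) • z ∈ Bset + (c : ℝ) • 𝔽} := by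
        refine convexHull_min ?_ (convex_shift_smul hDconv _ _)
        rintro zz ⟨f, hf, rfl⟩
        have hfF : f ∈ F := hTF hf
        obtain ⟨m, hm, u, hu, heq⟩ := Set.mem_add.1 (hkeyQ f hfF)
        obtain ⟨fv, hfv, rfl⟩ := hu
        have hca := congrArg ca heq
        rw [ca_add, ca_add, ca_smul, ca_smul] at hca
        show ca y + (c : ℝ) • ca f ∈ Bset + (c : ℝ) • 𝔽
        rw [← hca]
        have hrreal : (r : ℝ) = (c : ℝ) + (-(h : ℝ)) := by
          have h1 : r = c - h := by linarith [hcr]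
          rw [h1]; push_cast; ring
        have hsplitpt : ca m + (r : ℝ) • ca fv
            = (ca m + (-(h : ℝ)) • ca fv) + (c : ℝ) • ca fv := by
          rw [hrreal]; module
        rw [hsplitpt]
        exact Set.add_mem_add (Set.add_mem_add (hM𝕄 m hm)
          (Set.smul_mem_smul_set (hF𝔽 fv hfv))) (Set.smul_mem_smul_set (hF𝔽 fv hfv))
      intro z hz
      exact hsub2 hz
    refine cancel (C := (c : ℝ) • 𝔽) hBconv'
      ((h𝕄compact.add (h𝔽compact.smul _)).isClosed) (h𝔽ne.smul_set)
      (R := |(c : ℝ)| * R) ?_ ?_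
    · rintro cc ⟨z, hz, rfl⟩
      rw [norm_smul, Real.norm_eq_abs]
      exact mul_le_mul_of_nonneg_left (h𝔽R z hz) (abs_nonneg _)
    · rintro cc ⟨z, hz, rfl⟩
      exact hmemD z hz

  have hBconv : ∀ h : ℤ, Convex ℝ (𝕄 + (-(h : ℝ)) • 𝔽) := fun h => h𝕄conv.add (h𝔽conv.smul _)
  have hBclosed : ∀ h : ℤ, IsClosed (𝕄 + (-(h : ℝ)) • 𝔽) := fun h =>
    (h𝕄compact.add (h𝔽compact.smul _)).isClosed
  -- conclusion for the G-part
  have hGsub : ∀ h : ℤ, h < 0 → G h ⊆ M := by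
    intro h h0 x hx
    have hhpos : (0 : ℝ) < -(h : ℝ) := by
      have : (h : ℝ) < 0 := by exact_mod_cast h0
      linarith
    have hxreal : ∀ z ∈ 𝔽, ca x + (-(h : ℝ)) • z ∈ 𝕄 + (-(h : ℝ)) • 𝔽 := by
      have hsub2 : 𝔽 ⊆ {z | ca x + (-(h : ℝ)) • z ∈ 𝕄 + (-(h : ℝ)) • 𝔽} := by
        refine convexHull_min ?_ (convex_shift_smul (hBconv h) _ _)
        rintro zz ⟨f, hf, rfl⟩
        have hfF : f ∈ F := hTF hf
        have hslicemem : x + (-(h : ℚ)) • f ∈ wSlice w h P :=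
          (hG h h0).2.2 (Set.add_mem_add hx (Set.smul_mem_smul_set hfF))
        rw [hslice h] at hslicemem
        have hcax := ca_convexHull hslicemem
        have hsub3 : convexHull ℝ (ca '' L h) ⊆ 𝕄 + (-(h : ℝ)) • 𝔽 := by
          refine convexHull_min ?_ (hBconv h)
          rintro zz2 ⟨y, hy, rfl⟩
          exact hcore h h0 y hy
        rw [ca_add, ca_smul] at hcax
        have hcast : ((-(h : ℚ) : ℚ) : ℝ) = -(h : ℝ) := by push_cast; ring
        rw [hcast] at hcax
        exact hsub3 hcax
      intro z hz
      exact hsub2 hz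
    have hcan2 : ca x ∈ 𝕄 := by
      refine cancel (C := (-(h : ℝ)) • 𝔽) h𝕄conv h𝕄compact.isClosed (h𝔽ne.smul_set)
        (R := |(-(h : ℝ))| * R) ?_ ?_
      · rintro cc ⟨z, hz, rfl⟩
        rw [norm_smul, Real.norm_eq_abs]
        exact mul_le_mul_of_nonneg_left (h𝔽R z hz) (abs_nonneg _)
      · rintro cc ⟨z, hz, rfl⟩
        exact hxreal z hz
    have hfinal : ca x ∈ convexHull ℝ (ca '' ((hX₀fin.toFinset : Finset (Fin n → ℚ)) : Set (Fin n → ℚ))) := by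
      rwa [hX₀fin.coe_toFinset]
    have hrat := rat_convexHull hfinal
    rw [hX₀fin.coe_toFinset] at hrat
    exact hconvX₀M hrat
  -- finish
  rw [mutation]
  refine convexHull_min ?_ hMconv
  rintro z (hz | hz)
  · simp only [Set.mem_iUnion] at hz
    obtain ⟨h, h0, hzh⟩ := hz
    exact hGsub h h0 hzh
  · exact subset_convexHull ℚ _ (Or.inr hz)

/-- Combinatorial mutations are independent of the choice of the polytopes `{G_h}`. -/
theorem mutation_well_defined {n : ℕ} (w : Fin n → ℤ) (P F : Set (Fin n → ℚ))
    (G G' : ℤ → Set (Fin n → ℚ)) (hP : IsLatticePolytope P)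
    (h0 : (0 : Fin n → ℚ) ∈ interior P) (hw : IsPrimitive w)
    (hdata : IsMutData w P F G) (hdata' : IsMutData w P F G') :
    mutation w P F G = mutation w P F G' := by
  classical
  apply Set.eq_of_subset_of_subset
  · exact mutation_subset_aux w P F G G' hP hdata hdata'
  · exact mutation_subset_aux w P F G' G hP hdata' hdata

end Main
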